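/- If the Hahn series ring R((Γ)) over a linearly ordered abelian group Γ is a right Ikeda–Nakayama ring, then so is R. -/

import Mathlib

/-- A right ideal (as a subset). -/
def IsRightIdeal {S : Type*} [Ring S] (I : Set S) : Prop :=
  0 ∈ I ∧ (∀ a ∈ I, ∀ b ∈ I, a + b ∈ I) ∧ (∀ a ∈ I, -a ∈ I) ∧
    ∀ a ∈ I, ∀ r : S, a * r ∈ I

/-- A ring `S` is a right Ikeda–Nakayama ring if `ℓ(I ∩ J) = ℓ(I) + ℓ(J)`
for all right ideals `I`, `J` of `S`. -/
def IsRightIN (S : Type*) [Ring S] : Prop :=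
  ∀ I J : Set S, IsRightIdeal I → IsRightIdeal J →
    {x : S | ∀ a ∈ I ∩ J, x * a = 0} =
      {x : S | ∃ y z : S, (∀ a ∈ I, y * a = 0) ∧ (∀ a ∈ J, z * a = 0) ∧ x = y + z}

lemma hahn_lift_isRightIdeal {R : Type*} [Ring R] {Γ : Type*}
    [AddCommGroup Γ] [LinearOrder Γ] [IsOrderedAddMonoid Γ] {I : Set R} (hI : IsRightIdeal I) :
    IsRightIdeal {f : HahnSeries Γ R | ∀ g, f.coeff g ∈ I} := by
  obtain ⟨h0, hadd, hneg, hmul⟩ := hI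
  refine ⟨fun g => by simpa using h0, fun a ha b hb g => by simpa using hadd _ (ha g) _ (hb g),
    fun a ha g => by simpa using hneg _ (ha g), fun a ha r g => ?_⟩
  rw [HahnSeries.coeff_mul]
  let M : AddSubmonoid R :=
    { carrier := I, zero_mem' := h0, add_mem' := fun hx hy => hadd _ hx _ hy }
  exact M.sum_mem (fun ij _ => hmul _ (ha ij.1) (r.coeff ij.2))

/-- If the Hahn series ring `R((Γ))` is a right Ikeda–Nakayama ring, then so is `R`. -/
theorem rightIN_of_hahnSeries {R : Type*} [Ring R] (Γ : Type*)
    [AddCommGroup Γ] [LinearOrder Γ] [IsOrderedAddMonoid Γ] (h : IsRightIN (HahnSeries Γ R)) :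
    IsRightIN R := by
  intro I J hI hJ
  have key := h _ _ (hahn_lift_isRightIdeal (Γ := Γ) hI) (hahn_lift_isRightIdeal (Γ := Γ) hJ)
  ext x
  constructor
  · intro hx
    have hxmem : (HahnSeries.single (0 : Γ) x : HahnSeries Γ R) ∈
        {f : HahnSeries Γ R | ∀ a ∈ {f : HahnSeries Γ R | ∀ g, f.coeff g ∈ I} ∩
          {f : HahnSeries Γ R | ∀ g, f.coeff g ∈ J}, f * a = 0} := by
      intro a ha
      ext g
      rw [HahnSeries.coeff_single_zero_mul]
      exact hx _ ⟨ha.1 g, ha.2 g⟩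
    rw [key] at hxmem
    obtain ⟨Y, Z, hY, hZ, hYZ⟩ := hxmem
    refine ⟨Y.coeff 0, Z.coeff 0, ?_, ?_, ?_⟩
    · intro a ha
      have : (Y * HahnSeries.single (0 : Γ) a) = 0 := by
        apply hY
        intro g
        rcases eq_or_ne g 0 with rfl | hg
        · simpa using ha
        · simp [HahnSeries.coeff_single_of_ne hg, hI.1]
      have := congrArg (fun f => HahnSeries.coeff f 0) this
      simpa [HahnSeries.coeff_mul_single_zero] using this
    · intro a ha
      have : (Z * HahnSeries.single (0 : Γ) a) = 0 := by
        apply hZ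
        intro g
        rcases eq_or_ne g 0 with rfl | hg
        · simpa using ha
        · simp [HahnSeries.coeff_single_of_ne hg, hJ.1]
      have := congrArg (fun f => HahnSeries.coeff f 0) this
      simpa [HahnSeries.coeff_mul_single_zero] using this
    · have := congrArg (fun f => HahnSeries.coeff f 0) hYZ
      simpa using this
  · rintro ⟨y, z, hy, hz, rfl⟩ a ⟨haI, haJ⟩
    rw [add_mul, hy a haI, hz a haJ, add_zero]
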